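/- Let n be a positive integer, 1 < p < ∞, and β > p − 1, and let Ω = B(0,1) be the open unit ball in ℝⁿ. Then cap_{p,β}(E,Ω) = 0 for every set E ⋐ Ω. -/

import Mathlib

open MeasureTheory Metric Set
open scoped ENNReal NNReal

noncomputable section

/-- The distance from `x` to the complement of `Ω`. -/
def distC {n : ℕ} (Ω : Set (EuclideanSpace ℝ (Fin n))) (x : EuclideanSpace ℝ (Fin n)) : ℝ :=
  Metric.infDist x Ωᶜ

/-- The distance between two sets. -/
def sDist {n : ℕ} (E F : Set (EuclideanSpace ℝ (Fin n))) : ℝ :=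
  sInf (Set.image2 dist E F)

/-- A function is admissible for `Ω` if it is Lipschitz and has compact support contained
in `Ω`. -/
def Admissible {n : ℕ} (Ω : Set (EuclideanSpace ℝ (Fin n)))
    (u : EuclideanSpace ℝ (Fin n) → ℝ) : Prop :=
  (∃ K : NNReal, LipschitzWith K u) ∧ HasCompactSupport u ∧ tsupport u ⊆ Ω

/-- `E` is compactly contained in `Ω`: `E` is bounded and has positive distance to `Ωᶜ`. -/
def CptIn {n : ℕ} (E Ω : Set (EuclideanSpace ℝ (Fin n))) : Prop :=
  Bornology.IsBounded E ∧ 0 < sDist E Ωᶜ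

/-- The weighted `p`-energy of `u` on `Ω` with the distance weight `d(x,Ωᶜ)^β`. -/
def energy {n : ℕ} (p β : ℝ) (Ω : Set (EuclideanSpace ℝ (Fin n)))
    (u : EuclideanSpace ℝ (Fin n) → ℝ) : ℝ≥0∞ :=
  ∫⁻ x in Ω, ENNReal.ofReal (‖fderiv ℝ u x‖ ^ p * distC Ω x ^ β)

/-- The weighted relative `(p,β)`-capacity of `E` in `Ω`. -/
def wcap {n : ℕ} (p β : ℝ) (E Ω : Set (EuclideanSpace ℝ (Fin n))) : ℝ≥0∞ :=
  ⨅ (u : EuclideanSpace ℝ (Fin n) → ℝ)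
    (_ : Admissible Ω u ∧ ∀ x ∈ E, 1 ≤ u x), energy p β Ω u

/-- The `(q,p,β)`-Hardy–Sobolev inequality holds in `Ω` with constant `C`. -/
def HardySobolev {n : ℕ} (q p β : ℝ) (Ω : Set (EuclideanSpace ℝ (Fin n))) (C : ℝ) : Prop :=
  ∀ u : EuclideanSpace ℝ (Fin n) → ℝ, Admissible Ω u →
    (∫⁻ x in Ω, ENNReal.ofReal
        (|u x| ^ q * distC Ω x ^ (q / p * ((n : ℝ) - p + β) - n))) ^ (1 / q) ≤
      ENNReal.ofReal C * (energy p β Ω u) ^ (1 / p)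

/-- Elementary: for `0 ≤ b ≤ a ≤ 1`, `a^k - b^k ≤ k (a - b)`. -/
lemma pow_sub_pow_le_aux (k : ℕ) {a b : ℝ} (hb : 0 ≤ b) (hba : b ≤ a) (ha : a ≤ 1) :
    a ^ k - b ^ k ≤ k * (a - b) := by
  induction k with
  | zero => simp
  | succ m ih =>
    have h1 : a ^ (m + 1) - b ^ (m + 1) = a * (a ^ m - b ^ m) + (a - b) * b ^ m := by ring
    have h2 : a * (a ^ m - b ^ m) ≤ a ^ m - b ^ m := by
      nlinarith [pow_le_pow_left₀ hb hba m, pow_nonneg hb m]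
    have h3 : (a - b) * b ^ m ≤ a - b := by
      nlinarith [pow_le_one₀ hb (hba.trans ha) (n := m)]
    push_cast
    nlinarith

/-- In the unit ball, for `β > p - 1` the weighted relative capacity of every
compactly contained set vanishes. -/
theorem stmt10 {n : ℕ} (hn : 0 < n) (p β : ℝ) (hp : 1 < p) (hβ : p - 1 < β) :
    ∀ E : Set (EuclideanSpace ℝ (Fin n)),
      CptIn E (Metric.ball (0 : EuclideanSpace ℝ (Fin n)) 1) →
        wcap p β E (Metric.ball (0 : EuclideanSpace ℝ (Fin n)) 1) = 0 := by
  haveI hnt : Nontrivial (EuclideanSpace ℝ (Fin n)) := by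
    refine Module.nontrivial_of_finrank_pos (R := ℝ) ?_
    rw [finrank_euclideanSpace_fin]; exact hn
  intro E hE
  set Ω : Set (EuclideanSpace ℝ (Fin n)) := Metric.ball (0 : EuclideanSpace ℝ (Fin n)) 1
    with hΩ
  obtain ⟨-, hr⟩ := hE
  set r := sDist E Ωᶜ with hrdef
  have hp0 : (0:ℝ) < p := by linarith
  have hβ0 : (0:ℝ) < β := by linarith
  have hs : (0:ℝ) < β - p + 1 := by linarith
  -- points of norm ≥ 1 are in the complement
  have hcompl : ∀ x : EuclideanSpace ℝ (Fin n), 1 ≤ ‖x‖ → x ∈ Ωᶜ := by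
    intro x hx
    simp only [hΩ, mem_compl_iff, mem_ball, dist_zero_right, not_lt]
    exact hx
  -- for 0 < ‖x‖ < 1, the rescaled point witnesses dist to the complement
  have hpt : ∀ x : EuclideanSpace ℝ (Fin n), 0 < ‖x‖ → ‖x‖ < 1 →
      ∃ y ∈ Ωᶜ, dist x y = 1 - ‖x‖ := by
    intro x h0 h1
    refine ⟨‖x‖⁻¹ • x, hcompl _ ?_, ?_⟩
    · rw [norm_smul, Real.norm_eq_abs, abs_of_pos (inv_pos.2 h0)]
      rw [inv_mul_cancel₀ h0.ne']
    · rw [dist_eq_norm]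
      have hxy : x - ‖x‖⁻¹ • x = (1 - ‖x‖⁻¹) • x := by
        rw [sub_smul, one_smul]
      rw [hxy, norm_smul, Real.norm_eq_abs]
      have hinv : (1:ℝ) < ‖x‖⁻¹ := (one_lt_inv₀ h0).2 h1
      rw [abs_of_nonpos (by linarith)]
      field_simp
      ring
  have hnear : ∀ x : EuclideanSpace ℝ (Fin n), 0 < ‖x‖ → ‖x‖ < 1 →
      Metric.infDist x Ωᶜ ≤ 1 - ‖x‖ := by
    intro x h0 h1
    obtain ⟨y, hy, hd⟩ := hpt x h0 h1
    calc Metric.infDist x Ωᶜ ≤ dist x y := Metric.infDist_le_dist_of_mem hy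
      _ = 1 - ‖x‖ := hd
  set Vb := volume (Metric.ball (0 : EuclideanSpace ℝ (Fin n)) 1) with hVbdef
  have hVb : Vb ≠ ⊤ := measure_ball_lt_top.ne
  -- the key estimate
  have key : ∀ δ : ℝ, δ ∈ Set.Ioo (0:ℝ) (min r 1) →
      wcap p β E Ω ≤
        ENNReal.ofReal ((2/δ) ^ p * δ ^ β) * (ENNReal.ofReal ((n:ℝ) * (δ/2)) * Vb) := by
    rintro δ ⟨hδ0, hδm⟩
    have hδr : δ < r := hδm.trans_le (min_le_left _ _)
    have hδ1 : δ < 1 := hδm.trans_le (min_le_right _ _)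
    have h2δ : (0:ℝ) < 2/δ := by positivity
    set g : ℝ → ℝ := fun t => (1 - δ/2 - t) * (2/δ) with hg
    set u : EuclideanSpace ℝ (Fin n) → ℝ := fun x => max (min (g ‖x‖) 1) 0 with hu
    have hgl : LipschitzWith (Real.toNNReal (2/δ)) g := by
      apply LipschitzWith.of_dist_le_mul
      intro s t
      rw [Real.dist_eq, Real.dist_eq]
      have heq : g s - g t = (t - s) * (2/δ) := by simp only [hg]; ring
      rw [Real.coe_toNNReal _ h2δ.le, heq, abs_mul, abs_of_pos h2δ, abs_sub_comm t s,
        mul_comm]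
    have hul : LipschitzWith (Real.toNNReal (2/δ) * 1) u :=
      ((hgl.min_const 1).max_const 0).comp lipschitzWith_one_norm
    have hK : ((Real.toNNReal (2/δ) * 1 : ℝ≥0) : ℝ) = 2/δ := by
      simp [Real.coe_toNNReal _ h2δ.le]
    have hu1 : ∀ x : EuclideanSpace ℝ (Fin n), ‖x‖ ≤ 1 - δ → u x = 1 := by
      intro x hx
      have hδδ : (δ/2) * (2/δ) = 1 := by field_simp
      have hg1 : 1 ≤ g ‖x‖ := by
        rw [hg]
        calc (1:ℝ) = (δ/2) * (2/δ) := hδδ.symm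
          _ ≤ (1 - δ/2 - ‖x‖) * (2/δ) :=
            mul_le_mul_of_nonneg_right (by linarith) h2δ.le
      simp only [hu, min_eq_right hg1]
      exact max_eq_left zero_le_one
    have hu0 : ∀ x : EuclideanSpace ℝ (Fin n), 1 - δ/2 < ‖x‖ → u x = 0 := by
      intro x hx
      have hg0 : g ‖x‖ ≤ 0 :=
        mul_nonpos_of_nonpos_of_nonneg (by linarith) h2δ.le
      have hm : min (g ‖x‖) 1 ≤ 0 := le_trans (min_le_left _ _) hg0
      simp only [hu]
      exact max_eq_right hm
    have hsupp : Function.support u ⊆ closedBall (0 : EuclideanSpace ℝ (Fin n)) (1 - δ/2) := by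
      intro x hx
      simp only [mem_closedBall, dist_zero_right]
      by_contra h
      push_neg at h
      exact hx (hu0 x h)
    have hcs : HasCompactSupport u := by
      apply HasCompactSupport.intro (isCompact_closedBall (0 : EuclideanSpace ℝ (Fin n)) (1 - δ/2))
      intro x hx
      apply hu0
      simpa [mem_closedBall, dist_zero_right, not_le] using hx
    have hts : tsupport u ⊆ Ω := by
      refine (closure_minimal hsupp Metric.isClosed_closedBall).trans ?_
      rw [hΩ]
      exact closedBall_subset_ball (by linarith)
    have hadm : Admissible Ω u := ⟨⟨_, hul⟩, hcs, hts⟩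
    have hones : ∀ x ∈ E, 1 ≤ u x := by
      intro x hxE
      have hb : BddBelow (Set.image2 dist E Ωᶜ) := by
        refine ⟨0, ?_⟩
        rintro z ⟨a, ha, b, hbm, rfl⟩
        exact dist_nonneg
      have hxn : ‖x‖ ≤ 1 - δ := by
        by_contra h
        push_neg at h
        rcases le_or_gt 1 ‖x‖ with h1 | h1
        · have hx' : x ∈ Ωᶜ := hcompl x h1
          have hle : r ≤ dist x x := csInf_le hb (mem_image2_of_mem hxE hx')
          rw [dist_self] at hle
          linarith
        · have h0 : 0 < ‖x‖ := by linarith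
          obtain ⟨y, hy, hd⟩ := hpt x h0 h1
          have hle : r ≤ dist x y := csInf_le hb (mem_image2_of_mem hxE hy)
          rw [hd] at hle
          linarith
      rw [hu1 x hxn]
    -- derivative vanishes away from the transition annulus
    have hdz : ∀ x : EuclideanSpace ℝ (Fin n),
        (‖x‖ < 1 - δ ∨ 1 - δ/2 < ‖x‖) → fderiv ℝ u x = 0 := by
      rintro x (h | h)
      · have hop : IsOpen {y : EuclideanSpace ℝ (Fin n) | ‖y‖ < 1 - δ} :=
          isOpen_lt continuous_norm continuous_const
        have hev : u =ᶠ[nhds x] fun _ => (1:ℝ) := by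
          filter_upwards [hop.mem_nhds h] with y hy using hu1 y (le_of_lt hy)
        rw [hev.fderiv_eq]
        exact fderiv_const_apply 1
      · have hop : IsOpen {y : EuclideanSpace ℝ (Fin n) | 1 - δ/2 < ‖y‖} :=
          isOpen_lt continuous_const continuous_norm
        have hev : u =ᶠ[nhds x] fun _ => (0:ℝ) := by
          filter_upwards [hop.mem_nhds h] with y hy using hu0 y hy
        rw [hev.fderiv_eq]
        exact fderiv_const_apply 0
    have hdle : ∀ x : EuclideanSpace ℝ (Fin n), ‖fderiv ℝ u x‖ ≤ 2/δ := by
      intro x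
      have := norm_fderiv_le_of_lipschitz ℝ hul (x₀ := x)
      rwa [hK] at this
    set S := closedBall (0 : EuclideanSpace ℝ (Fin n)) (1 - δ/2) \
      Metric.ball (0 : EuclideanSpace ℝ (Fin n)) (1 - δ) with hS
    set M := ENNReal.ofReal ((2/δ) ^ p * δ ^ β) with hM
    -- pointwise bound of the integrand
    have hptw : ∀ x : EuclideanSpace ℝ (Fin n),
        ENNReal.ofReal (‖fderiv ℝ u x‖ ^ p * distC Ω x ^ β) ≤
          S.indicator (fun _ => M) x := by
      intro x
      by_cases hx : x ∈ S
      · rw [indicator_of_mem hx]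
        obtain ⟨hx1, hx2⟩ := hx
        rw [mem_closedBall, dist_zero_right] at hx1
        rw [mem_ball, dist_zero_right, not_lt] at hx2
        have hdist : distC Ω x ≤ δ := by
          have h1 : ‖x‖ < 1 := by linarith
          have h0 : 0 < ‖x‖ := by linarith
          have := hnear x h0 h1
          simp only [distC]
          linarith
        apply ENNReal.ofReal_le_ofReal
        have h1 : ‖fderiv ℝ u x‖ ^ p ≤ (2/δ) ^ p :=
          Real.rpow_le_rpow (norm_nonneg _) (hdle x) hp0.le
        have h2 : distC Ω x ^ β ≤ δ ^ β :=
          Real.rpow_le_rpow Metric.infDist_nonneg hdist hβ0.le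
        exact mul_le_mul h1 h2 (Real.rpow_nonneg Metric.infDist_nonneg β)
          (Real.rpow_nonneg h2δ.le p)
      · rw [indicator_of_notMem hx]
        have hfz : fderiv ℝ u x = 0 := by
          apply hdz
          rw [hS, mem_diff] at hx
          push_neg at hx
          by_cases hc : ‖x‖ ≤ 1 - δ/2
          · left
            have hxb := hx (by simpa [mem_closedBall, dist_zero_right] using hc)
            simpa [mem_ball, dist_zero_right] using hxb
          · right
            push_neg at hc
            exact hc
        rw [hfz]
        simp [Real.zero_rpow hp0.ne']
    have hSmeas : MeasurableSet S := measurableSet_closedBall.diff measurableSet_ball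
    have henergy : energy p β Ω u ≤ M * volume S := by
      calc energy p β Ω u ≤ ∫⁻ x in Ω, S.indicator (fun _ => M) x :=
            lintegral_mono fun x => hptw x
        _ ≤ ∫⁻ x, S.indicator (fun _ => M) x := setLIntegral_le_lintegral _ _
        _ = M * volume S := by
            rw [lintegral_indicator hSmeas]
            exact setLIntegral_const S M
    have hvol : volume S ≤ ENNReal.ofReal ((n:ℝ) * (δ/2)) * Vb := by
      have hsub : Metric.ball (0 : EuclideanSpace ℝ (Fin n)) (1 - δ) ⊆
          closedBall (0 : EuclideanSpace ℝ (Fin n)) (1 - δ/2) :=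
        (ball_subset_ball (by linarith)).trans ball_subset_closedBall
      rw [hS, measure_diff hsub measurableSet_ball.nullMeasurableSet measure_ball_lt_top.ne,
        Measure.addHaar_closedBall _ _ (by linarith : (0:ℝ) ≤ 1 - δ/2),
        Measure.addHaar_ball _ _ (by linarith : (0:ℝ) ≤ 1 - δ), finrank_euclideanSpace_fin,
        ← ENNReal.sub_mul (fun _ _ => measure_ball_lt_top.ne)]
      apply mul_le_mul_left
      rw [← ENNReal.ofReal_sub _ (pow_nonneg (by linarith) n)]
      apply ENNReal.ofReal_le_ofReal
      calc (1 - δ/2) ^ n - (1 - δ) ^ n ≤ n * ((1 - δ/2) - (1 - δ)) :=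
            pow_sub_pow_le_aux n (by linarith) (by linarith) (by linarith)
        _ = n * (δ/2) := by ring
    calc wcap p β E Ω ≤ energy p β Ω u := by
          exact iInf_le_of_le u (iInf_le_of_le ⟨hadm, hones⟩ le_rfl)
      _ ≤ M * volume S := henergy
      _ ≤ M * (ENNReal.ofReal ((n:ℝ) * (δ/2)) * Vb) := mul_le_mul_right hvol M
  -- let δ → 0⁺
  set F : ℝ → ℝ≥0∞ := fun δ =>
    ENNReal.ofReal ((2/δ) ^ p * δ ^ β) * (ENNReal.ofReal ((n:ℝ) * (δ/2)) * Vb) with hF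
  have hFeq : ∀ δ : ℝ, 0 < δ →
      F δ = ENNReal.ofReal ((2:ℝ) ^ (p-1) * n * δ ^ (β - p + 1)) * Vb := by
    intro δ hδ0
    have hδp : (0:ℝ) < δ ^ p := Real.rpow_pos_of_pos hδ0 p
    have hA : (0:ℝ) ≤ (2/δ) ^ p * δ ^ β := mul_nonneg (Real.rpow_nonneg (by positivity) p) (Real.rpow_nonneg hδ0.le β)
    rw [hF]
    simp only
    rw [← mul_assoc, ← ENNReal.ofReal_mul hA]
    congr 2
    have h1 : ((2:ℝ)/δ) ^ p = 2 ^ p / δ ^ p := Real.div_rpow (by norm_num) hδ0.le p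
    have h2 : (2:ℝ) ^ p = 2 ^ (p-1) * 2 := by
      rw [← Real.rpow_add_one (by norm_num : (2:ℝ) ≠ 0) (p-1)]
      norm_num
    have h3 : δ ^ (β - p + 1) = δ ^ β * δ / δ ^ p := by
      rw [show β - p + 1 = (β + 1) - p by ring, Real.rpow_sub hδ0,
        Real.rpow_add_one hδ0.ne' β]
    rw [h1, h2, h3]
    field_simp
  have htend : Filter.Tendsto F (nhdsWithin (0:ℝ) (Set.Ioi 0)) (nhds 0) := by
    have h1 : Filter.Tendsto (fun δ : ℝ => δ ^ (β - p + 1))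
        (nhdsWithin (0:ℝ) (Set.Ioi 0)) (nhds 0) := by
      have hc := (Real.continuousAt_rpow_const 0 (β - p + 1) (Or.inr hs.le)).tendsto
      rw [Real.zero_rpow hs.ne'] at hc
      exact hc.mono_left nhdsWithin_le_nhds
    have h2 : Filter.Tendsto (fun δ : ℝ => (2:ℝ) ^ (p-1) * n * δ ^ (β - p + 1))
        (nhdsWithin (0:ℝ) (Set.Ioi 0)) (nhds 0) := by
      simpa using h1.const_mul ((2:ℝ) ^ (p-1) * n)
    have h3 : Filter.Tendsto (fun δ : ℝ =>
        ENNReal.ofReal ((2:ℝ) ^ (p-1) * n * δ ^ (β - p + 1)))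
        (nhdsWithin (0:ℝ) (Set.Ioi 0)) (nhds 0) := by
      have := (ENNReal.continuous_ofReal.tendsto 0).comp h2
      simpa [Function.comp_def] using this
    have h4 : Filter.Tendsto (fun δ : ℝ =>
        ENNReal.ofReal ((2:ℝ) ^ (p-1) * n * δ ^ (β - p + 1)) * Vb)
        (nhdsWithin (0:ℝ) (Set.Ioi 0)) (nhds 0) := by
      have := ENNReal.Tendsto.mul_const h3 (Or.inr hVb)
      simpa using this
    refine h4.congr' ?_
    filter_upwards [self_mem_nhdsWithin] with δ hδ
    exact (hFeq δ hδ).symm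
  have hev : ∀ᶠ δ in nhdsWithin (0:ℝ) (Set.Ioi 0), wcap p β E Ω ≤ F δ := by
    filter_upwards [Ioo_mem_nhdsGT (lt_min hr one_pos)] with δ hδ
    exact key δ hδ
  exact le_zero_iff.mp (ge_of_tendsto htend hev)
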